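/- Let m ≥ 3 and let Υ(m−1) be the GreedySwaps list for m−1 variables (Υ(2) = [1]; Υ(k) = Υ(k−1) ++ [k−1, …, 1] ++ [i+1 : i ∈ Υ(k−1)]). Define two sequences of permutations of {1, …, m}: sequence A starts at the identity permutation and applies the adjacent transpositions at the positions listed in Υ(m−1) in order; sequence B starts at the permutation σ_0 with σ_0(1) = m and σ_0(k+1) = k for 1 ≤ k ≤ m−1, and applies the adjacent transpositions at the positions listed in [i+1 : i ∈ Υ(m−1)] in order. Then every subset S ⊆ {1, …, m} with 1 ≤ |S| ≤ m−1 occurs as the prefix set of size |S| of some permutation appearing in sequence A or in sequence B. -/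

import Mathlib

/-- The prefix set of size `k` of a permutation `σ` of `{1, …, m}` (represented
0-indexed as `Equiv.Perm (Fin m)`): the set `{σ(1), …, σ(k)}`. -/
def prefixSet {m : ℕ} (σ : Equiv.Perm (Fin m)) (k : ℕ) : Finset (Fin m) :=
  (Finset.univ.filter fun i : Fin m => (i : ℕ) < k).image σ

/-- The adjacent transposition at (1-indexed) position `j` of an ordering of
`m` variables: it swaps positions `j` and `j+1` (0-indexed `j−1` and `j`). -/
def adjSwap (m j : ℕ) : Equiv.Perm (Fin m) :=
  if h : 1 ≤ j ∧ j + 1 ≤ m then Equiv.swap ⟨j - 1, by omega⟩ ⟨j, by omega⟩ else 1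

/-- `σ'` is obtained from `σ` by an adjacent transposition at some position. -/
def IsAdjSwapStep {m : ℕ} (σ σ' : Equiv.Perm (Fin m)) : Prop :=
  ∃ j : ℕ, 1 ≤ j ∧ j + 1 ≤ m ∧ σ' = σ * adjSwap m j

def prodSwaps (m : ℕ) (L : List ℕ) : Equiv.Perm (Fin m) := (L.map (adjSwap m)).prod

lemma prodSwaps_nil (m : ℕ) : prodSwaps m [] = 1 := rfl

lemma prodSwaps_cons (m a : ℕ) (L : List ℕ) :
    prodSwaps m (a :: L) = adjSwap m a * prodSwaps m L := by
  simp [prodSwaps]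

lemma prodSwaps_append (m : ℕ) (L1 L2 : List ℕ) :
    prodSwaps m (L1 ++ L2) = prodSwaps m L1 * prodSwaps m L2 := by
  simp [prodSwaps]

lemma mem_prefixSet {m : ℕ} {σ : Equiv.Perm (Fin m)} {k : ℕ} {x : Fin m} :
    x ∈ prefixSet σ k ↔ ((σ⁻¹ x : Fin m) : ℕ) < k := by
  simp only [prefixSet, Finset.mem_image, Finset.mem_filter, Finset.mem_univ, true_and]
  constructor
  · rintro ⟨i, hi, rfl⟩; simpa using hi
  · intro h; exact ⟨σ⁻¹ x, h, by simp⟩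

def FixesGe {m : ℕ} (w : Equiv.Perm (Fin m)) (k : ℕ) : Prop :=
  ∀ i : Fin m, k ≤ (i : ℕ) → w i = i

lemma FixesGe.one {m k : ℕ} : FixesGe (1 : Equiv.Perm (Fin m)) k := fun _ _ => rfl

lemma FixesGe.mul {m k : ℕ} {v w : Equiv.Perm (Fin m)} (hv : FixesGe v k) (hw : FixesGe w k) :
    FixesGe (v * w) k := fun i hi => by
  simp [Equiv.Perm.mul_apply, hw i hi, hv i hi]

lemma FixesGe.inv {m k : ℕ} {w : Equiv.Perm (Fin m)} (hw : FixesGe w k) :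
    FixesGe w⁻¹ k := fun i hi => by
  have := hw i hi
  conv_lhs => rw [← this]
  simp

lemma FixesGe.lt {m k : ℕ} {w : Equiv.Perm (Fin m)} (hw : FixesGe w k) {x : Fin m}
    (hx : (x : ℕ) < k) : ((w x : Fin m) : ℕ) < k := by
  by_contra h
  push_neg at h
  have := hw (w x) h
  have := w.injective this
  omega

lemma fixesGe_adjSwap {m k j : ℕ} (h : j + 1 ≤ k) : FixesGe (adjSwap m j) k := by
  intro i hi
  unfold adjSwap
  split
  · next hj =>
    apply Equiv.swap_apply_of_ne_of_ne <;> (intro he; subst he; simp at hi; omega)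
  · rfl

lemma fixesGe_prodSwaps {m k : ℕ} {L : List ℕ} (h : ∀ j ∈ L, j + 1 ≤ k) :
    FixesGe (prodSwaps m L) k := by
  induction L with
  | nil => exact FixesGe.one
  | cons a L ih =>
    rw [prodSwaps_cons]
    exact (fixesGe_adjSwap (h a (by simp))).mul (ih fun j hj => h j (by simp [hj]))

lemma card_prefixSet {m k : ℕ} (hk : k ≤ m) (σ : Equiv.Perm (Fin m)) :
    (prefixSet σ k).card = k := by
  rw [prefixSet, Finset.card_image_of_injective _ σ.injective]
  have : (Finset.univ.filter fun i : Fin m => (i : ℕ) < k)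
      = Finset.map ⟨Fin.castLE hk, Fin.castLE_injective hk⟩ Finset.univ := by
    ext x
    simp only [Finset.mem_filter, Finset.mem_univ, true_and, Finset.mem_map,
      Function.Embedding.coeFn_mk]
    constructor
    · intro h; exact ⟨⟨x, h⟩, rfl⟩
    · rintro ⟨y, rfl⟩; exact y.isLt
  rw [this]; simp

lemma prefixSet_zero {m : ℕ} (σ : Equiv.Perm (Fin m)) : prefixSet σ 0 = ∅ := by
  simp [prefixSet]

/-- The "bubble" list `[k-1, k-2, …, 1]`. -/
def DList (k : ℕ) : List ℕ := (List.range (k - 1)).map (fun j => k - 1 - j)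

lemma DList_succ {k : ℕ} (hk : 2 ≤ k) : DList k = (k - 1) :: DList (k - 1) := by
  unfold DList
  obtain ⟨n, rfl⟩ : ∃ n, k = n + 2 := ⟨k - 2, by omega⟩
  rw [show n + 2 - 1 = n + 1 from rfl, List.range_succ_eq_map]
  simp only [List.map_cons, List.map_map, Nat.sub_zero]
  congr 1
  apply List.map_congr_left
  intro j hj
  simp only [Function.comp_apply]
  omega

lemma cyc_apply {m k : ℕ} (hk1 : 1 ≤ k) (hkm : k ≤ m) (x : Fin m) :
    ((prodSwaps m (DList k)) x : ℕ)
      = if (x : ℕ) = 0 then k - 1 else if (x : ℕ) < k then (x : ℕ) - 1 else (x : ℕ) := by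
  induction k with
  | zero => omega
  | succ k ih =>
    rcases Nat.eq_or_lt_of_le hk1 with h1 | h2
    · have hk0 : k = 0 := by omega
      subst hk0
      simp [DList, prodSwaps]
      split <;> omega
    · have hk : 1 ≤ k := by omega
      rw [DList_succ (by omega), prodSwaps_cons]
      simp only [Nat.add_sub_cancel]
      have hval := ih hk (by omega)
      have hadj : adjSwap m k = Equiv.swap (⟨k - 1, by omega⟩ : Fin m) ⟨k, by omega⟩ := by
        unfold adjSwap; rw [dif_pos ⟨hk, by omega⟩]
      rw [Equiv.Perm.mul_apply, hadj, Equiv.swap_apply_def]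
      simp only [apply_ite (Fin.val), Fin.ext_iff]
      split_ifs at hval ⊢ <;> omega

lemma cyc_inv_apply {m k : ℕ} (hk1 : 1 ≤ k) (hkm : k ≤ m) (x : Fin m) :
    (((prodSwaps m (DList k))⁻¹ x : Fin m) : ℕ)
      = if (x : ℕ) = k - 1 then 0 else if (x : ℕ) + 1 < k then (x : ℕ) + 1 else (x : ℕ) := by
  set c := prodSwaps m (DList k) with hc
  by_cases h1 : (x : ℕ) = k - 1
  · rw [if_pos h1]
    have : c ⟨0, by omega⟩ = x := by
      apply Fin.ext
      rw [cyc_apply hk1 hkm]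
      simp [h1]
    rw [← this, Equiv.Perm.inv_def, Equiv.symm_apply_apply]
  · rw [if_neg h1]
    by_cases h2 : (x : ℕ) + 1 < k
    · rw [if_pos h2]
      have : c ⟨(x : ℕ) + 1, by omega⟩ = x := by
        apply Fin.ext
        rw [cyc_apply hk1 hkm]
        simp only []
        rw [if_neg (by omega), if_pos (by omega)]
        omega
      conv_lhs => rw [← this, Equiv.Perm.inv_def, Equiv.symm_apply_apply]
    · rw [if_neg h2]
      have : c x = x := by
        apply Fin.ext
        rw [cyc_apply hk1 hkm]
        rw [if_neg (by omega), if_neg (by omega)]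
      conv_lhs => rw [← this, Equiv.Perm.inv_def, Equiv.symm_apply_apply]


lemma adjSwap_conj {m k j : ℕ} (hj : 1 ≤ j) (hjk : j + 2 ≤ k) (hkm : k ≤ m) :
    adjSwap m (j + 1) = (prodSwaps m (DList k))⁻¹ * adjSwap m j * prodSwaps m (DList k) := by
  have hadj : adjSwap m j = Equiv.swap (⟨j - 1, by omega⟩ : Fin m) ⟨j, by omega⟩ := by
    unfold adjSwap; rw [dif_pos ⟨hj, by omega⟩]
  have hadj1 : adjSwap m (j + 1) = Equiv.swap (⟨j, by omega⟩ : Fin m) ⟨j + 1, by omega⟩ := by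
    unfold adjSwap; rw [dif_pos ⟨by omega, by omega⟩]
    congr 1
  have h : ∀ x, (prodSwaps m (DList k)) ((adjSwap m (j + 1)) x)
      = (adjSwap m j) ((prodSwaps m (DList k)) x) := by
    intro x
    apply Fin.ext
    rw [hadj, hadj1, cyc_apply (show 1 ≤ k by omega) hkm]
    simp only [Equiv.swap_apply_def, apply_ite Fin.val, Fin.ext_iff,
      cyc_apply (show 1 ≤ k by omega) hkm]
    split_ifs <;> try contradiction
    all_goals omega
  have hcomm : prodSwaps m (DList k) * adjSwap m (j + 1) = adjSwap m j * prodSwaps m (DList k) := by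
    apply Equiv.ext
    intro x
    simpa [Equiv.Perm.mul_apply] using h x
  rw [mul_assoc, ← hcomm, inv_mul_cancel_left]

lemma prodSwaps_map_succ {m k : ℕ} {L : List ℕ} (hkm : k ≤ m)
    (hL : ∀ j ∈ L, 1 ≤ j ∧ j + 2 ≤ k) :
    prodSwaps m (L.map (· + 1))
      = (prodSwaps m (DList k))⁻¹ * prodSwaps m L * prodSwaps m (DList k) := by
  induction L with
  | nil => simp [prodSwaps_nil]
  | cons a L ih =>
    rw [List.map_cons, prodSwaps_cons, prodSwaps_cons,
      ih (fun j hj => hL j (by simp [hj])),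
      adjSwap_conj (hL a (by simp)).1 (hL a (by simp)).2 hkm]
    simp only [mul_assoc, mul_inv_cancel_left]

lemma prefixSet_mul_cyc {m k j : ℕ} (hkm : k ≤ m) (hj1 : 1 ≤ j) (hjk : j ≤ k)
    (σ : Equiv.Perm (Fin m)) :
    prefixSet (σ * prodSwaps m (DList k)) j
      = insert (σ ⟨k - 1, by omega⟩) (prefixSet σ (j - 1)) := by
  ext x
  rw [Finset.mem_insert, mem_prefixSet, mem_prefixSet, mul_inv_rev, Equiv.Perm.mul_apply]
  obtain ⟨y, hy⟩ : ∃ y, σ⁻¹ x = y := ⟨_, rfl⟩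
  rw [hy]
  have hxy : x = σ y := by rw [← hy]; simp
  rw [cyc_inv_apply (by omega) hkm]
  constructor
  · intro h
    split_ifs at h with h1 h2
    · left; rw [hxy]; congr 1; exact Fin.ext h1
    · right; omega
    · right; omega
  · rintro (h | h)
    · have h1 : y = ⟨k - 1, by omega⟩ := σ.injective (by rw [← hxy, h])
      rw [if_pos (by rw [h1])]
      omega
    · split_ifs <;> omega

lemma upsilon_mem (Υ : ℕ → List ℕ) (hbase : Υ 2 = [1])
    (hrec : ∀ k, 3 ≤ k →
      Υ k = Υ (k - 1) ++ (List.range (k - 1)).map (fun j => k - 1 - j)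
              ++ (Υ (k - 1)).map (· + 1)) :
    ∀ k, 2 ≤ k → ∀ j ∈ Υ k, 1 ≤ j ∧ j + 1 ≤ k := by
  intro k
  induction k using Nat.strong_induction_on with
  | _ k ih =>
    intro hk j hj
    rcases eq_or_lt_of_le hk with h2 | h3
    · rw [← h2, hbase] at hj
      simp at hj
      omega
    · rw [hrec k h3] at hj
      simp only [List.mem_append, List.mem_map, List.mem_range] at hj
      rcases hj with (hj | ⟨a, ha, rfl⟩) | ⟨a, ha, rfl⟩
      · have := ih (k - 1) (by omega) (by omega) j hj; omega
      · omega
      · have := ih (k - 1) (by omega) (by omega) a ha; omega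

lemma seq_prod {m : ℕ} (L : List ℕ) (f : ℕ → ℕ) (π : ℕ → Equiv.Perm (Fin m))
    (hstep : ∀ t, t < L.length → π (t + 1) = π t * adjSwap m (f (L.getD t 0))) :
    ∀ t, t ≤ L.length → π t = π 0 * prodSwaps m ((L.take t).map f) := by
  intro t
  induction t with
  | zero => intro _; simp [prodSwaps]
  | succ t ih =>
    intro ht
    have ht' : t < L.length := by omega
    rw [hstep t ht', ih (by omega), List.take_succ, List.getElem?_eq_getElem ht']
    simp only [Option.toList_some, List.map_append, prodSwaps_append, List.map_cons,
      List.map_nil, prodSwaps_cons, prodSwaps_nil, mul_one]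
    rw [List.getD_eq_getElem L 0 ht', mul_assoc]

lemma key_cover {m : ℕ} (Υ : ℕ → List ℕ) (hbase : Υ 2 = [1])
    (hrec : ∀ k, 3 ≤ k →
      Υ k = Υ (k - 1) ++ (List.range (k - 1)).map (fun j => k - 1 - j)
              ++ (Υ (k - 1)).map (· + 1)) :
    ∀ k, 2 ≤ k → k ≤ m → ∀ ρ : Equiv.Perm (Fin m), ∀ S : Finset (Fin m),
      1 ≤ S.card → S.card ≤ k → (∀ x ∈ S, ((ρ⁻¹ x : Fin m) : ℕ) < k) →
      ∃ t ≤ (Υ k).length, prefixSet (ρ * prodSwaps m ((Υ k).take t)) S.card = S := by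
  intro k
  induction k using Nat.strong_induction_on with
  | _ k ih =>
  intro hk2 hkm ρ S hS1 hSk hmem
  by_cases hfull : S.card = k
  · -- take t = 0
    refine ⟨0, Nat.zero_le _, ?_⟩
    rw [List.take_zero, prodSwaps_nil, mul_one]
    have hsub : S ⊆ prefixSet ρ S.card := fun x hx =>
      mem_prefixSet.2 (by rw [hfull]; exact hmem x hx)
    exact (Finset.eq_of_subset_of_card_le hsub
      (le_of_eq (card_prefixSet (by omega) ρ))).symm
  rcases eq_or_lt_of_le hk2 with h2 | h3
  · -- base case k = 2
    subst h2
    rw [hbase]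
    have hcard : S.card = 1 := by omega
    obtain ⟨x, rfl⟩ := Finset.card_eq_one.mp hcard
    have hx2 : ((ρ⁻¹ x : Fin m) : ℕ) < 2 := hmem x (Finset.mem_singleton_self x)
    have hs : adjSwap m 1 = Equiv.swap (⟨0, by omega⟩ : Fin m) ⟨1, by omega⟩ := by
      unfold adjSwap; rw [dif_pos ⟨le_refl 1, by omega⟩]
    by_cases h0 : ((ρ⁻¹ x : Fin m) : ℕ) = 0
    · refine ⟨0, by simp, ?_⟩
      rw [List.take_zero, prodSwaps_nil, mul_one, Finset.card_singleton]
      ext y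
      rw [mem_prefixSet, Finset.mem_singleton]
      constructor
      · intro h
        have h' : ρ⁻¹ y = ρ⁻¹ x := Fin.ext (by omega)
        simpa using congrArg ρ h'
      · rintro rfl; omega
    · refine ⟨1, by simp, ?_⟩
      rw [show ([1] : List ℕ).take 1 = [1] from rfl, prodSwaps_cons, prodSwaps_nil,
        mul_one, Finset.card_singleton, hs]
      ext y
      rw [mem_prefixSet, Finset.mem_singleton, mul_inv_rev, Equiv.Perm.mul_apply,
        Equiv.swap_inv]
      have hyx : y = x ↔ ((ρ⁻¹ y : Fin m) : ℕ) = 1 := by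
        constructor
        · rintro rfl; omega
        · intro h
          have h' : ρ⁻¹ y = ρ⁻¹ x := Fin.ext (by omega)
          simpa using congrArg ρ h'
      rw [hyx, Equiv.swap_apply_def]
      simp only [apply_ite Fin.val, Fin.ext_iff]
      split_ifs <;> omega
  · -- inductive step, 3 ≤ k
    have h3' : 3 ≤ k := h3
    have hU : Υ k = Υ (k - 1) ++ DList k ++ (Υ (k - 1)).map (· + 1) := hrec k h3'
    have hmemL1 : ∀ j ∈ Υ (k - 1), 1 ≤ j ∧ j + 1 ≤ k - 1 :=
      upsilon_mem Υ hbase hrec (k - 1) (by omega)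
    have hDlen : (DList k).length = k - 1 := by simp [DList]
    have hlen : (Υ k).length = (Υ (k - 1)).length + (k - 1) + (Υ (k - 1)).length := by
      rw [hU]; simp only [List.length_append, List.length_map, hDlen]
    set v := ρ ⟨k - 1, by omega⟩ with hv_def
    by_cases hv : v ∈ S
    · -- use phase 3 (or the start of it)
      have hAfix : FixesGe (prodSwaps m (Υ (k - 1))) (k - 1) :=
        fixesGe_prodSwaps (fun j hj => (hmemL1 j hj).2)
      -- the permutation after phases 1+2 and s steps of phase 3
      have hperm : ∀ s ≤ (Υ (k - 1)).length,
          ρ * prodSwaps m ((Υ k).take ((Υ (k - 1)).length + (k - 1) + s))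
            = (ρ * prodSwaps m (Υ (k - 1)) * prodSwaps m ((Υ (k - 1)).take s))
                * prodSwaps m (DList k) := by
        intro s hs
        have htake : (Υ k).take ((Υ (k - 1)).length + (k - 1) + s)
            = Υ (k - 1) ++ DList k ++ ((Υ (k - 1)).take s).map (· + 1) := by
          rw [hU, List.append_assoc, show (Υ (k-1)).length + (k-1) + s
              = (Υ (k-1)).length + ((k-1) + s) by omega,
            List.take_length_add_append, List.append_assoc]
          congr 1
          rw [show (k - 1) + s = (DList k).length + s by omega, List.take_length_add_append,
            List.map_take]
        rw [htake, prodSwaps_append, prodSwaps_append,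
          prodSwaps_map_succ hkm (fun j hj => by
            have := hmemL1 j (List.mem_of_mem_take hj); omega)]
        simp only [mul_assoc, mul_inv_cancel_left]
      by_cases hj1 : S.card = 1
      · -- S = {v}, take s = 0
        refine ⟨(Υ (k - 1)).length + (k - 1) + 0, by omega, ?_⟩
        rw [hperm 0 (Nat.zero_le _), List.take_zero, prodSwaps_nil, mul_one, hj1,
          prefixSet_mul_cyc hkm (le_refl 1) (by omega), prefixSet_zero]
        have hSv : S = {v} := by
          obtain ⟨x, hx⟩ := Finset.card_eq_one.mp hj1
          rw [hx] at hv ⊢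
          rw [Finset.mem_singleton] at hv
          rw [hv]
        have hval : (ρ * prodSwaps m (Υ (k - 1))) ⟨k - 1, by omega⟩ = v := by
          rw [Equiv.Perm.mul_apply, hAfix _ (le_refl (k - 1))]
        rw [hval, hSv]
        simp
      · -- S.card ≥ 2: apply IH to S.erase v with starting permutation ρ * A
        have hcard' : (S.erase v).card = S.card - 1 := Finset.card_erase_of_mem hv
        have hmem' : ∀ x ∈ S.erase v,
            (((ρ * prodSwaps m (Υ (k - 1)))⁻¹ x : Fin m) : ℕ) < k - 1 := by
          intro x hx
          have hxS := Finset.mem_of_mem_erase hx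
          have hxv := Finset.ne_of_mem_erase hx
          have h1 : ((ρ⁻¹ x : Fin m) : ℕ) < k := hmem x hxS
          have h2 : ((ρ⁻¹ x : Fin m) : ℕ) ≠ k - 1 := by
            intro h
            apply hxv
            have : ρ⁻¹ x = ⟨k - 1, by omega⟩ := Fin.ext h
            rw [hv_def, ← this]
            simp
          rw [mul_inv_rev, Equiv.Perm.mul_apply]
          exact hAfix.inv.lt (by omega)
        obtain ⟨s, hs, hP⟩ := ih (k - 1) (by omega) (by omega) (by omega)
          (ρ * prodSwaps m (Υ (k - 1))) (S.erase v) (by omega) (by omega) hmem'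
        refine ⟨(Υ (k - 1)).length + (k - 1) + s, by omega, ?_⟩
        rw [hperm s hs,
          prefixSet_mul_cyc hkm (by omega) (by omega)]
        have hfixv : (ρ * prodSwaps m (Υ (k - 1)) * prodSwaps m ((Υ (k - 1)).take s))
            ⟨k - 1, by omega⟩ = v := by
          have hUfix : FixesGe (prodSwaps m ((Υ (k - 1)).take s)) (k - 1) :=
            fixesGe_prodSwaps (fun j hj =>
              (hmemL1 j (List.mem_of_mem_take hj)).2)
          rw [Equiv.Perm.mul_apply, Equiv.Perm.mul_apply,
            hUfix _ (le_refl (k - 1)), hAfix _ (le_refl (k - 1))]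
        rw [hcard'] at hP
        rw [hfixv, hP, Finset.insert_erase hv]
    · -- v ∉ S : use phase 1
      have hm' : ∀ x ∈ S, ((ρ⁻¹ x : Fin m) : ℕ) < k - 1 := by
        intro x hx
        have h1 := hmem x hx
        have h2 : ((ρ⁻¹ x : Fin m) : ℕ) ≠ k - 1 := by
          intro h
          apply hv
          have : ρ⁻¹ x = ⟨k - 1, by omega⟩ := Fin.ext h
          rw [hv_def, ← this]
          simpa using hx
        omega
      have hcard' : S.card ≤ k - 1 := by
        have hsub : S ⊆ prefixSet ρ (k - 1) := fun x hx => mem_prefixSet.2 (hm' x hx)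
        have := Finset.card_le_card hsub
        rwa [card_prefixSet (by omega)] at this
      obtain ⟨t, ht, hP⟩ := ih (k - 1) (by omega) (by omega) (by omega) ρ S hS1 hcard' hm'
      refine ⟨t, by omega, ?_⟩
      rw [hU, List.take_append_of_le_length (by
          rw [List.length_append]; omega),
        List.take_append_of_le_length ht]
      exact hP

/-- Let m ≥ 3 and Υ(m−1) be the GreedySwaps list for m−1 variables.
Sequence A starts at the identity permutation of {1, …, m} and applies the adjacent
transpositions at the positions listed in Υ(m−1); sequence B starts at the
permutation σ₀ with σ₀(1) = m and σ₀(k+1) = k for 1 ≤ k ≤ m−1 (0-indexed: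
σ₀(0) = m−1 and σ₀(k) = k−1 for k ≥ 1) and applies the adjacent transpositions at
the positions [i+1 : i ∈ Υ(m−1)].  Then every subset S ⊆ {1, …, m} with
1 ≤ |S| ≤ m−1 occurs as the prefix set of size |S| of some permutation in
sequence A or sequence B. -/
theorem two_processor_scheme_correct (m : ℕ) (hm : 3 ≤ m)
    (Υ : ℕ → List ℕ)
    (hbase : Υ 2 = [1])
    (hrec : ∀ k, 3 ≤ k →
      Υ k = Υ (k - 1) ++ (List.range (k - 1)).map (fun j => k - 1 - j)
              ++ (Υ (k - 1)).map (· + 1))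
    (πA πB : ℕ → Equiv.Perm (Fin m))
    (hA0 : πA 0 = 1)
    (hAstep : ∀ t, t < (Υ (m - 1)).length →
      πA (t + 1) = πA t * adjSwap m ((Υ (m - 1)).getD t 0))
    (hB0 : ∀ x : Fin m,
      ((πB 0) x : ℕ) = if (x : ℕ) = 0 then m - 1 else (x : ℕ) - 1)
    (hBstep : ∀ t, t < (Υ (m - 1)).length →
      πB (t + 1) = πB t * adjSwap m ((Υ (m - 1)).getD t 0 + 1)) :
    ∀ S : Finset (Fin m), 1 ≤ S.card → S.card ≤ m - 1 →
      (∃ t ≤ (Υ (m - 1)).length, prefixSet (πA t) S.card = S) ∨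
      (∃ t ≤ (Υ (m - 1)).length, prefixSet (πB t) S.card = S) := by
  intro S hS1 hSm
  have hmemL : ∀ j ∈ Υ (m - 1), 1 ≤ j ∧ j + 1 ≤ m - 1 :=
    upsilon_mem Υ hbase hrec (m - 1) (by omega)
  -- product formula for sequence A
  have hπA : ∀ t ≤ (Υ (m - 1)).length, πA t = prodSwaps m ((Υ (m - 1)).take t) := by
    intro t ht
    have := seq_prod (Υ (m - 1)) id πA (fun t ht' => hAstep t ht') t ht
    rwa [hA0, one_mul, List.map_id] at this
  -- πB 0 is the m-cycle
  have hB0c : πB 0 = prodSwaps m (DList m) := by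
    apply Equiv.ext
    intro x
    apply Fin.ext
    rw [hB0 x, cyc_apply (by omega) (le_refl m) x]
    have := x.isLt
    split_ifs <;> omega
  -- product formula for sequence B
  have hπB : ∀ t ≤ (Υ (m - 1)).length,
      πB t = prodSwaps m ((Υ (m - 1)).take t) * prodSwaps m (DList m) := by
    intro t ht
    have h1 := seq_prod (Υ (m - 1)) (· + 1) πB (fun t ht' => hBstep t ht') t ht
    rw [hB0c, prodSwaps_map_succ (le_refl m) (fun j hj => by
        have := hmemL j (List.mem_of_mem_take hj); omega)] at h1
    rw [h1]
    simp only [mul_assoc, mul_inv_cancel_left]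
  by_cases hv : (⟨m - 1, by omega⟩ : Fin m) ∈ S
  · -- S contains variable m: use sequence B
    right
    by_cases hj1 : S.card = 1
    · refine ⟨0, Nat.zero_le _, ?_⟩
      have hSv : S = {(⟨m - 1, by omega⟩ : Fin m)} := by
        obtain ⟨x, hx⟩ := Finset.card_eq_one.mp hj1
        rw [hx] at hv ⊢
        rw [Finset.mem_singleton] at hv
        rw [hv]
      have h0 := hπB 0 (Nat.zero_le _)
      rw [List.take_zero, prodSwaps_nil, one_mul] at h0
      rw [h0, hj1, show prodSwaps m (DList m) = 1 * prodSwaps m (DList m) by rw [one_mul],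
        prefixSet_mul_cyc (le_refl m) (le_refl 1) (by omega), prefixSet_zero, hSv]
      simp
    · -- S.card ≥ 2
      have hcard' : (S.erase ⟨m - 1, by omega⟩).card = S.card - 1 :=
        Finset.card_erase_of_mem hv
      have hmem' : ∀ x ∈ S.erase (⟨m - 1, by omega⟩ : Fin m),
          (((1 : Equiv.Perm (Fin m))⁻¹ x : Fin m) : ℕ) < m - 1 := by
        intro x hx
        have hxv := Finset.ne_of_mem_erase hx
        have : ((x : Fin m) : ℕ) ≠ m - 1 := by
          intro h
          exact hxv (Fin.ext h)
        simp only [inv_one, Equiv.Perm.one_apply]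
        have := x.isLt
        omega
      obtain ⟨t, ht, hP⟩ := key_cover Υ hbase hrec (m - 1) (by omega) (by omega)
        1 (S.erase ⟨m - 1, by omega⟩) (by omega) (by omega) hmem'
      rw [one_mul] at hP
      simp only [hcard'] at hP
      refine ⟨t, ht, ?_⟩
      rw [hπB t ht, prefixSet_mul_cyc (le_refl m) (by omega) (by omega)]
      have hfix : (prodSwaps m ((Υ (m - 1)).take t)) ⟨m - 1, by omega⟩
          = ⟨m - 1, by omega⟩ := by
        exact fixesGe_prodSwaps (fun j hj => by
          have := hmemL j (List.mem_of_mem_take hj); omega) _ (le_refl (m - 1))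
      rw [hfix, hP, Finset.insert_erase hv]
  · -- S does not contain variable m: use sequence A
    left
    have hmem' : ∀ x ∈ S, (((1 : Equiv.Perm (Fin m))⁻¹ x : Fin m) : ℕ) < m - 1 := by
      intro x hx
      have : ((x : Fin m) : ℕ) ≠ m - 1 := by
        intro h
        exact hv (by rwa [show (⟨m - 1, by omega⟩ : Fin m) = x from (Fin.ext h).symm])
      simp only [inv_one, Equiv.Perm.one_apply]
      have := x.isLt
      omega
    obtain ⟨t, ht, hP⟩ := key_cover Υ hbase hrec (m - 1) (by omega) (by omega)
      1 S hS1 hSm hmem'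
    rw [one_mul] at hP
    exact ⟨t, ht, by rw [hπA t ht]; exact hP⟩
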